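/- Let Cay(G,S) be a Cayley graph satisfying condition (S2). Then for every m ≥ 2, all i_1, …, i_m, k ∈ I(G), and every permutation σ of {1, …, m}, one has tilde p_{i_{σ(1)},…,i_{σ(m)}}^k = tilde p_{i_1,…,i_m}^k; equivalently, the number of m-tuples (v_1, …, v_m) ∈ S_{i_{σ(1)}}(e) × ⋯ × S_{i_{σ(m)}}(e) with d(e, v_1 ⋯ v_m) = k equals the number of m-tuples (v_1, …, v_m) ∈ S_{i_1}(e) × ⋯ × S_{i_m}(e) with d(e, v_1 ⋯ v_m) = k. -/

import Mathlib

open scoped BigOperators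

noncomputable section

/-- The Cayley graph of a group `G` with connection set `S`. -/
def cayley {G : Type*} [Group G] (S : Set G) : SimpleGraph G :=
  SimpleGraph.fromRel (fun v w => v⁻¹ * w ∈ S)

/-- The sphere of radius `n` around `v` in the graph `Γ`. -/
def gsphere {V : Type*} (Γ : SimpleGraph V) (v : V) (n : ℕ) : Set V :=
  {w | Γ.dist v w = n}

/-- `I(Γ, v₀)`: the set of distances realized from the base point `v₀`. -/
def idx {V : Type*} (Γ : SimpleGraph V) (v0 : V) : Set ℕ :=
  {n | (gsphere Γ v0 n).Nonempty}

/-- `walkCoeff Γ v0 v [i₁,…,iₘ] k` is the coefficient `tilde p_{i₁,…,iₘ}^k` of a walk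
starting at `v`: the probability that an `m`-step random walk `v → v₁ → ⋯ → vₘ` whose
`j`-th step goes to a uniformly random vertex of `S_{i_j}(v_{j-1})` ends at distance `k`
from `v₀`. -/
noncomputable def walkCoeff {V : Type*} (Γ : SimpleGraph V) (v0 : V) :
    V → List ℕ → ℕ → ℚ
  | v, [], k => if Γ.dist v0 v = k then 1 else 0
  | v, i :: rest, k =>
      ∑ᶠ w ∈ gsphere Γ v i, walkCoeff Γ v0 w rest k / ((gsphere Γ v i).ncard : ℚ)

namespace CayleyAux

/-! ### Generic facts about graph isomorphisms and distances -/

lemma iso_dist_le {V V' : Type*} {A : SimpleGraph V} {B : SimpleGraph V'}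
    (φ : A ≃g B) (u v : V) : B.dist (φ u) (φ v) ≤ A.dist u v := by
  by_cases h : A.Reachable u v
  · obtain ⟨p, hp⟩ := h.exists_walk_length_eq_dist
    calc B.dist (φ u) (φ v) ≤ (p.map φ.toHom).length := SimpleGraph.dist_le _
      _ = A.dist u v := by rw [SimpleGraph.Walk.length_map, hp]
  · rw [SimpleGraph.dist_eq_zero_of_not_reachable h,
      SimpleGraph.dist_eq_zero_of_not_reachable]
    exact fun hr => h (SimpleGraph.Iso.reachable_iff.mp hr)

lemma iso_dist {V V' : Type*} {A : SimpleGraph V} {B : SimpleGraph V'}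
    (φ : A ≃g B) (u v : V) : B.dist (φ u) (φ v) = A.dist u v := by
  refine le_antisymm (iso_dist_le φ u v) ?_
  have := iso_dist_le φ.symm (φ u) (φ v)
  simpa using this

variable {G : Type*} [Group G] {S : Set G}

/-- Left multiplication as an automorphism of the Cayley graph. -/
def mulLeftIso (S : Set G) (g : G) : cayley S ≃g cayley S where
  toEquiv := Equiv.mulLeft g
  map_rel_iff' := by
    intro a b
    simp [cayley, SimpleGraph.fromRel_adj, Equiv.coe_mulLeft, mul_assoc,
      inv_mul_cancel_left]

@[simp] lemma mulLeftIso_apply (g x : G) : mulLeftIso S g x = g * x := rfl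

lemma dist_mul_left (g u v : G) :
    (cayley S).dist (g * u) (g * v) = (cayley S).dist u v :=
  iso_dist (mulLeftIso S g) u v

lemma dist_one_mul (u v : G) :
    (cayley S).dist u v = (cayley S).dist 1 (u⁻¹ * v) := by
  have := dist_mul_left (S := S) u⁻¹ u v
  simpa using this.symm

lemma gsphere_mul_left (g v : G) (n : ℕ) :
    gsphere (cayley S) (g * v) n = (g * ·) '' gsphere (cayley S) v n := by
  ext w
  simp only [gsphere, Set.mem_setOf_eq, Set.mem_image]
  constructor
  · intro h
    refine ⟨g⁻¹ * w, ?_, by group⟩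
    have h2 := dist_mul_left (S := S) g v (g⁻¹ * w)
    rw [show g * (g⁻¹ * w) = w by group] at h2
    rw [← h2]; exact h
  · rintro ⟨x, hx, rfl⟩
    rw [dist_mul_left]; exact hx

lemma gsphere_one (v : G) (n : ℕ) :
    gsphere (cayley S) v n = (v * ·) '' gsphere (cayley S) 1 n := by
  have := gsphere_mul_left (S := S) v 1 n
  simpa using this

lemma ncard_gsphere (v : G) (n : ℕ) :
    (gsphere (cayley S) v n).ncard = (gsphere (cayley S) (1 : G) n).ncard := by
  rw [gsphere_one, Set.ncard_image_of_injective _ (mul_right_injective v)]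

lemma dist_one_inv (v : G) :
    (cayley S).dist (1 : G) v⁻¹ = (cayley S).dist 1 v := by
  have := dist_mul_left (S := S) v 1 v⁻¹
  simp only [mul_one, mul_inv_cancel] at this
  rw [← this, SimpleGraph.dist_comm]

lemma cayley_adj (hsym : ∀ s ∈ S, s⁻¹ ∈ S) (hid : (1 : G) ∉ S) {v w : G} :
    (cayley S).Adj v w ↔ v⁻¹ * w ∈ S := by
  simp only [cayley, SimpleGraph.fromRel_adj]
  constructor
  · rintro ⟨h, h1 | h2⟩
    · exact h1
    · have := hsym _ h2
      simpa [mul_inv_rev] using this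
  · intro h
    refine ⟨?_, Or.inl h⟩
    rintro rfl
    simp only [inv_mul_cancel] at h
    exact hid h

lemma cayley_preconnected (hsym : ∀ s ∈ S, s⁻¹ ∈ S) (hid : (1 : G) ∉ S)
    (hgen : Subgroup.closure S = ⊤) : (cayley S).Preconnected := by
  have key : ∀ g : G, (cayley S).Reachable 1 g := by
    intro g
    have hg : g ∈ Subgroup.closure S := by rw [hgen]; trivial
    induction hg using Subgroup.closure_induction with
    | mem x hx =>
      have : (cayley S).Adj 1 x := by
        rw [cayley_adj hsym hid]
        simpa using hx
      exact this.reachable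
    | one => exact SimpleGraph.Reachable.refl 1
    | mul x y _ _ hx hy =>
      refine hx.trans ?_
      have := hy.map (CayleyAux.mulLeftIso S x).toHom
      simpa [SimpleGraph.Iso.toHom, mulLeftIso_apply] using this
    | inv x _ hx =>
      have h2 := hx.map (CayleyAux.mulLeftIso S x⁻¹).toHom
      have h3 : (cayley S).Reachable x⁻¹ 1 := by
        simpa [SimpleGraph.Iso.toHom, mulLeftIso_apply] using h2
      exact h3.symm
  intro u v
  exact (key u).symm.trans (key v)

lemma nbr_finite (hfin : S.Finite) (hsym : ∀ s ∈ S, s⁻¹ ∈ S) (hid : (1 : G) ∉ S)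
    (u : G) : {w | (cayley S).Adj u w}.Finite := by
  refine (hfin.image (u * ·)).subset ?_
  intro w hw
  rw [Set.mem_setOf_eq, cayley_adj hsym hid] at hw
  exact ⟨u⁻¹ * w, hw, by group⟩

lemma sphere_finite (hfin : S.Finite) (hsym : ∀ s ∈ S, s⁻¹ ∈ S) (hid : (1 : G) ∉ S)
    (hgen : Subgroup.closure S = ⊤) :
    ∀ n, (gsphere (cayley S) (1 : G) n).Finite := by
  have hconn := cayley_preconnected hsym hid hgen
  intro n
  induction n with
  | zero =>
    refine (Set.finite_singleton (1 : G)).subset ?_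
    intro w hw
    have : (1 : G) = w := ((hconn 1 w).dist_eq_zero_iff).mp hw
    simp [← this]
  | succ n ih =>
    refine (Set.Finite.biUnion ih (fun u _ => nbr_finite hfin hsym hid u)).subset ?_
    intro w hw
    have hw' : (cayley S).dist 1 w = n + 1 := hw
    obtain ⟨p, hp⟩ := (hconn 1 w).exists_walk_length_eq_dist
    cases hq : p.reverse with
    | nil =>
      exfalso
      have : p.length = 0 := by
        have := congrArg SimpleGraph.Walk.length hq
        simpa using this
      rw [hp, hw'] at this
      exact Nat.succ_ne_zero n this
    | @cons _ u _ h q' =>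
      have hlen : q'.length = n := by
        have := congrArg SimpleGraph.Walk.length hq
        simp only [SimpleGraph.Walk.length_reverse, SimpleGraph.Walk.length_cons] at this
        rw [hp, hw'] at this
        omega
      have hle : (cayley S).dist 1 u ≤ n := by
        have := SimpleGraph.dist_le q'.reverse
        rwa [SimpleGraph.Walk.length_reverse, hlen] at this
      have hge : n ≤ (cayley S).dist 1 u := by
        have hne : Nonempty G := ⟨1⟩
        have hconn' : (cayley S).Connected := ⟨hconn⟩
        have htri := hconn'.dist_triangle (u := (1 : G)) (v := u) (w := w)
        have hda : (cayley S).dist u w ≤ 1 := by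
          have := SimpleGraph.dist_le h.symm.toWalk
          simpa using this
        omega
      have hu : u ∈ gsphere (cayley S) (1 : G) n := le_antisymm hle hge
      exact Set.mem_biUnion hu h.symm

lemma ball_finite (hfin : S.Finite) (hsym : ∀ s ∈ S, s⁻¹ ∈ S) (hid : (1 : G) ∉ S)
    (hgen : Subgroup.closure S = ⊤) (R : ℕ) :
    {z : G | (cayley S).dist 1 z ≤ R}.Finite := by
  refine (Set.Finite.biUnion (Set.finite_Iic R)
    (fun n _ => sphere_finite hfin hsym hid hgen n)).subset ?_
  intro z hz
  exact Set.mem_biUnion (Set.mem_Iic.mpr hz) (rfl : (cayley S).dist 1 z = _)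

lemma constancy
    (hS2 : ∀ i ∈ idx (cayley S) (1 : G), ∀ j ∈ idx (cayley S) (1 : G),
      ∀ k ∈ idx (cayley S) (1 : G),
      ∀ v ∈ gsphere (cayley S) (1 : G) k, ∀ v' ∈ gsphere (cayley S) (1 : G) k,
        (gsphere (cayley S) v i ∩ gsphere (cayley S) (1 : G) j).ncard
          = (gsphere (cayley S) v' i ∩ gsphere (cayley S) (1 : G) j).ncard)
    {a b : ℕ} (ha : a ∈ idx (cayley S) (1 : G)) (hb : b ∈ idx (cayley S) (1 : G))
    {u w u' w' : G} (h : (cayley S).dist u w = (cayley S).dist u' w') :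
    (gsphere (cayley S) u a ∩ gsphere (cayley S) w b).ncard
      = (gsphere (cayley S) u' a ∩ gsphere (cayley S) w' b).ncard := by
  have reduce : ∀ u w : G, (gsphere (cayley S) u a ∩ gsphere (cayley S) w b).ncard
      = (gsphere (cayley S) (w⁻¹ * u) a ∩ gsphere (cayley S) (1 : G) b).ncard := by
    intro u w
    have h1 : gsphere (cayley S) (w⁻¹ * u) a = (w⁻¹ * ·) '' gsphere (cayley S) u a :=
      gsphere_mul_left _ _ _
    have h2 : gsphere (cayley S) (1 : G) b = (w⁻¹ * ·) '' gsphere (cayley S) w b := by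
      have := gsphere_mul_left (S := S) w⁻¹ w b
      simpa using this
    rw [h1, h2, ← Set.image_inter (mul_right_injective w⁻¹),
      Set.ncard_image_of_injective _ (mul_right_injective _)]
  rw [reduce u w, reduce u' w']
  have hmem : ∀ u w : G, w⁻¹ * u ∈ gsphere (cayley S) (1 : G) ((cayley S).dist u w) := by
    intro u w
    show (cayley S).dist 1 (w⁻¹ * u) = (cayley S).dist u w
    rw [← dist_one_mul, SimpleGraph.dist_comm]
  have hm1 := hmem u w
  have hm2 := hmem u' w'
  rw [h] at hm1
  have hK : (cayley S).dist u' w' ∈ idx (cayley S) (1 : G) := ⟨_, hm1⟩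
  exact hS2 a ha b hb _ hK _ hm1 _ hm2

/-! ### The counting function `cnt` -/

end CayleyAux

/-- `cnt S F k l v` counts walks with prescribed step increments taken from the
finsets `F a`, ending at distance `k` from the identity. -/
noncomputable def cnt {G : Type*} [Group G] (S : Set G) (F : ℕ → Finset G) (k : ℕ) :
    List ℕ → G → ℕ
  | [], v => if (cayley S).dist 1 v = k then 1 else 0
  | a :: l, v => ∑ x ∈ F a, cnt S F k l (v * x)

namespace CayleyAux

variable {G : Type*} [Group G] {S : Set G}

lemma walkCoeff_cons (hsph : ∀ n, (gsphere (cayley S) (1 : G) n).Finite)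
    (v : G) (a : ℕ) (l : List ℕ) (k : ℕ) :
    walkCoeff (cayley S) 1 v (a :: l) k
      = (∑ x ∈ (hsph a).toFinset, walkCoeff (cayley S) 1 (v * x) l k)
          / ((gsphere (cayley S) (1 : G) a).ncard : ℚ) := by
  show (∑ᶠ w ∈ gsphere (cayley S) v a,
      walkCoeff (cayley S) 1 w l k / ((gsphere (cayley S) v a).ncard : ℚ)) = _
  rw [ncard_gsphere, gsphere_one v a,
    finsum_mem_image (Set.injOn_of_injective (mul_right_injective v)),
    finsum_mem_eq_finite_toFinset_sum _ (hsph a), Finset.sum_div]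

lemma walkCoeff_mul_prod (hsph : ∀ n, (gsphere (cayley S) (1 : G) n).Finite) (k : ℕ) :
    ∀ l : List ℕ, (∀ a ∈ l, a ∈ idx (cayley S) (1 : G)) → ∀ v : G,
      walkCoeff (cayley S) 1 v l k
          * (l.map fun a => ((gsphere (cayley S) (1 : G) a).ncard : ℚ)).prod
        = cnt S (fun n => (hsph n).toFinset) k l v := by
  intro l
  induction l with
  | nil =>
    intro _ v
    simp [walkCoeff, cnt, apply_ite (fun n : ℕ => (n : ℚ))]
  | cons a l ih =>
    intro hl v
    have hca : ((gsphere (cayley S) (1 : G) a).ncard : ℚ) ≠ 0 := by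
      have hne : (gsphere (cayley S) (1 : G) a).Nonempty := hl a (by simp)
      have hpos : 0 < (gsphere (cayley S) (1 : G) a).ncard :=
        hne.ncard_pos (hsph a)
      exact_mod_cast hpos.ne'
    rw [walkCoeff_cons hsph, List.map_cons, List.prod_cons]
    set c := ((gsphere (cayley S) (1 : G) a).ncard : ℚ)
    set P := (l.map fun a => ((gsphere (cayley S) (1 : G) a).ncard : ℚ)).prod
    have step : (∑ x ∈ (hsph a).toFinset, walkCoeff (cayley S) 1 (v * x) l k) / c * (c * P)
        = ∑ x ∈ (hsph a).toFinset, walkCoeff (cayley S) 1 (v * x) l k * P := by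
      rw [div_mul_eq_mul_div, mul_comm c P, ← mul_assoc, mul_div_assoc, div_self hca,
        mul_one, Finset.sum_mul]
    rw [step]
    show _ = ((∑ x ∈ (hsph a).toFinset, cnt S (fun n => (hsph n).toFinset) k l (v * x) : ℕ) : ℚ)
    push_cast
    exact Finset.sum_congr rfl fun x _ => ih (fun b hb => hl b (List.mem_cons_of_mem a hb)) (v * x)

lemma ball_of_sph (hsph : ∀ n, (gsphere (cayley S) (1 : G) n).Finite) (R : ℕ) :
    {z : G | (cayley S).dist 1 z ≤ R}.Finite := by
  refine (Set.Finite.biUnion (Set.finite_Iic R) (fun n _ => hsph n)).subset ?_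
  intro z hz
  exact Set.mem_biUnion (Set.mem_Iic.mpr hz) (rfl : (cayley S).dist 1 z = _)

lemma double_sum (hconn : (cayley S).Connected)
    (hsph : ∀ n, (gsphere (cayley S) (1 : G) n).Finite) (a b : ℕ) (f : G → ℚ) :
    ∑ x ∈ (hsph a).toFinset, ∑ y ∈ (hsph b).toFinset, f (x * y)
      = ∑ z ∈ (ball_of_sph hsph (a + b)).toFinset,
          ((gsphere (cayley S) (1 : G) a ∩ gsphere (cayley S) z b).ncard : ℚ) * f z := by
  set Y := (ball_of_sph hsph (a + b)).toFinset with hY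
  have step1 : ∀ x ∈ (hsph a).toFinset,
      ∑ y ∈ (hsph b).toFinset, f (x * y)
        = ∑ z ∈ Y.filter (fun z => (cayley S).dist x z = b), f z := by
    intro x hx
    have hxa : (cayley S).dist 1 x = a := (hsph a).mem_toFinset.mp hx
    refine Finset.sum_nbij' (i := fun y => x * y) (j := fun z => x⁻¹ * z) ?_ ?_ ?_ ?_ ?_
    · intro y hy
      have hyb : (cayley S).dist 1 y = b := (hsph b).mem_toFinset.mp hy
      have hd : (cayley S).dist x (x * y) = b := by
        have := dist_mul_left (S := S) x 1 y
        simpa [hyb] using this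
      refine Finset.mem_filter.mpr ⟨?_, hd⟩
      rw [hY, Set.Finite.mem_toFinset]
      show (cayley S).dist 1 (x * y) ≤ a + b
      calc (cayley S).dist 1 (x * y)
          ≤ (cayley S).dist 1 x + (cayley S).dist x (x * y) := hconn.dist_triangle
        _ = a + b := by rw [hxa, hd]
    · intro z hz
      obtain ⟨_, hdz⟩ := Finset.mem_filter.mp hz
      rw [Set.Finite.mem_toFinset]
      show (cayley S).dist 1 (x⁻¹ * z) = b
      rw [← dist_one_mul]
      exact hdz
    · intro y _; group
    · intro z _; group
    · intro y _; rfl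
  rw [Finset.sum_congr rfl step1]
  have step2 : ∀ x ∈ (hsph a).toFinset,
      ∑ z ∈ Y.filter (fun z => (cayley S).dist x z = b), f z
        = ∑ z ∈ Y, if (cayley S).dist x z = b then f z else 0 := by
    intro x _
    rw [Finset.sum_filter]
  rw [Finset.sum_congr rfl step2, Finset.sum_comm]
  refine Finset.sum_congr rfl fun z _ => ?_
  rw [← Finset.sum_filter, Finset.sum_const, nsmul_eq_mul]
  congr 1
  have hset : ↑((hsph a).toFinset.filter (fun x => (cayley S).dist x z = b))
      = gsphere (cayley S) (1 : G) a ∩ gsphere (cayley S) z b := by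
    ext x
    simp only [Finset.coe_filter, Set.mem_setOf_eq, Set.Finite.mem_toFinset,
      Set.mem_inter_iff]
    constructor
    · rintro ⟨h1, h2⟩
      exact ⟨h1, by rwa [gsphere, Set.mem_setOf_eq, SimpleGraph.dist_comm]⟩
    · rintro ⟨h1, h2⟩
      exact ⟨h1, by rwa [gsphere, Set.mem_setOf_eq, SimpleGraph.dist_comm] at h2⟩
  rw [← Set.ncard_coe_finset, hset]

lemma walkCoeff_swap (hconn : (cayley S).Connected)
    (hsph : ∀ n, (gsphere (cayley S) (1 : G) n).Finite)
    (hP : ∀ a ∈ idx (cayley S) (1 : G), ∀ b ∈ idx (cayley S) (1 : G),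
      ∀ u w u' w' : G, (cayley S).dist u w = (cayley S).dist u' w' →
        (gsphere (cayley S) u a ∩ gsphere (cayley S) w b).ncard
          = (gsphere (cayley S) u' a ∩ gsphere (cayley S) w' b).ncard)
    {a b : ℕ} (ha : a ∈ idx (cayley S) (1 : G)) (hb : b ∈ idx (cayley S) (1 : G))
    (l : List ℕ) (k : ℕ) (v : G) :
    walkCoeff (cayley S) 1 v (a :: b :: l) k = walkCoeff (cayley S) 1 v (b :: a :: l) k := by
  have expand : ∀ a b : ℕ, walkCoeff (cayley S) 1 v (a :: b :: l) k
      = (∑ x ∈ (hsph a).toFinset, ∑ y ∈ (hsph b).toFinset,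
            walkCoeff (cayley S) 1 (v * (x * y)) l k)
          / (((gsphere (cayley S) (1 : G) a).ncard : ℚ)
              * ((gsphere (cayley S) (1 : G) b).ncard : ℚ)) := by
    intro a b
    rw [walkCoeff_cons hsph]
    have : ∀ x ∈ (hsph a).toFinset, walkCoeff (cayley S) 1 (v * x) (b :: l) k
        = (∑ y ∈ (hsph b).toFinset, walkCoeff (cayley S) 1 (v * (x * y)) l k)
            / ((gsphere (cayley S) (1 : G) b).ncard : ℚ) := by
      intro x _
      rw [walkCoeff_cons hsph]
      simp [mul_assoc]
    rw [Finset.sum_congr rfl this, ← Finset.sum_div, div_div, mul_comm]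
  rw [expand a b, expand b a]
  rw [double_sum hconn hsph a b (fun z => walkCoeff (cayley S) 1 (v * z) l k),
    double_sum hconn hsph b a (fun z => walkCoeff (cayley S) 1 (v * z) l k)]
  rw [mul_comm ((gsphere (cayley S) (1 : G) b).ncard : ℚ)]
  congr 1
  rw [Nat.add_comm b a]
  refine Finset.sum_congr rfl fun z _ => ?_
  congr 2
  calc (gsphere (cayley S) (1 : G) a ∩ gsphere (cayley S) z b).ncard
      = (gsphere (cayley S) z a ∩ gsphere (cayley S) (1 : G) b).ncard :=
        hP a ha b hb 1 z z 1 (SimpleGraph.dist_comm ..)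
    _ = (gsphere (cayley S) (1 : G) b ∩ gsphere (cayley S) z a).ncard := by
        rw [Set.inter_comm]

lemma walkCoeff_perm (hconn : (cayley S).Connected)
    (hsph : ∀ n, (gsphere (cayley S) (1 : G) n).Finite)
    (hP : ∀ a ∈ idx (cayley S) (1 : G), ∀ b ∈ idx (cayley S) (1 : G),
      ∀ u w u' w' : G, (cayley S).dist u w = (cayley S).dist u' w' →
        (gsphere (cayley S) u a ∩ gsphere (cayley S) w b).ncard
          = (gsphere (cayley S) u' a ∩ gsphere (cayley S) w' b).ncard)
    (k : ℕ) {l₁ l₂ : List ℕ} (h : l₁.Perm l₂) :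
    (∀ a ∈ l₁, a ∈ idx (cayley S) (1 : G)) → ∀ v : G,
      walkCoeff (cayley S) 1 v l₁ k = walkCoeff (cayley S) 1 v l₂ k := by
  induction h with
  | nil => intro _ v; rfl
  | cons a h ih =>
    intro hl v
    rw [walkCoeff_cons hsph, walkCoeff_cons hsph]
    congr 1
    exact Finset.sum_congr rfl fun x _ =>
      ih (fun b hb => hl b (List.mem_cons_of_mem a hb)) (v * x)
  | swap a b l =>
    intro hl v
    exact walkCoeff_swap hconn hsph hP (hl b (by simp)) (hl a (by simp)) l k v
  | trans h1 h2 ih1 ih2 =>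
    intro hl v
    rw [ih1 hl v, ih2 (fun a ha => hl a (h1.mem_iff.mpr ha)) v]

omit [Group G] in
lemma sum_piFinset_succ {n : ℕ} (T : Fin (n + 1) → Finset G)
    (g : (Fin (n + 1) → G) → ℕ) :
    ∑ u ∈ Fintype.piFinset T, g u
      = ∑ x ∈ T 0, ∑ t ∈ Fintype.piFinset (fun s : Fin n => T s.succ), g (Fin.cons x t) := by
  rw [← Finset.sum_product']
  refine (Finset.sum_nbij' (i := fun u => (u 0, Fin.tail u))
    (j := fun p => Fin.cons p.1 p.2) ?_ ?_ ?_ ?_ ?_).symm.symm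
  · intro u hu
    rw [Fintype.mem_piFinset] at hu
    refine Finset.mem_product.mpr ⟨hu 0, ?_⟩
    rw [Fintype.mem_piFinset]
    intro s
    exact hu s.succ
  · intro p hp
    obtain ⟨h1, h2⟩ := Finset.mem_product.mp hp
    rw [Fintype.mem_piFinset] at h2 ⊢
    intro s
    induction s using Fin.cases with
    | zero => simpa using h1
    | succ s => simpa using h2 s
  · intro u _
    exact Fin.cons_self_tail u
  · intro p _
    simp [Fin.tail_cons]
  · intro u _
    rw [Fin.cons_self_tail u]

lemma card_pi (hsph : ∀ n, (gsphere (cayley S) (1 : G) n).Finite) (k : ℕ) :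
    ∀ (m : ℕ) (j : Fin m → ℕ) (v : G),
      ((Fintype.piFinset fun t => (hsph (j t)).toFinset).filter
          fun u => (cayley S).dist 1 (v * (List.ofFn u).prod) = k).card
        = cnt S (fun n => (hsph n).toFinset) k (List.ofFn j) v := by
  intro m
  induction m with
  | zero =>
    intro j v
    simp only [List.ofFn_zero, List.prod_nil, mul_one]
    show _ = cnt S (fun n => (hsph n).toFinset) k [] v
    by_cases h : (cayley S).dist 1 v = k
    · rw [Finset.filter_true_of_mem (fun _ _ => h)]
      simp [cnt, h, Fintype.card_piFinset]
    · rw [Finset.filter_false_of_mem (fun _ _ => h), Finset.card_empty]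
      simp [cnt, h]
  | succ n ih =>
    intro j v
    rw [List.ofFn_succ]
    show _ = cnt S (fun n => (hsph n).toFinset) k (j 0 :: List.ofFn fun s : Fin n => j s.succ) v
    rw [Finset.card_filter, sum_piFinset_succ]
    show (∑ x ∈ (hsph (j 0)).toFinset, ∑ t ∈ _, _) = ∑ x ∈ (hsph (j 0)).toFinset, _
    refine Finset.sum_congr rfl fun x _ => ?_
    have hofn : ∀ t : Fin n → G, List.ofFn (Fin.cons x t : Fin (n + 1) → G)
        = x :: List.ofFn t := by
      intro t
      rw [List.ofFn_succ]
      simp [Fin.cons_zero, Fin.cons_succ]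
    calc ∑ t ∈ Fintype.piFinset (fun s : Fin n => (hsph (j s.succ)).toFinset),
          (if (cayley S).dist 1 (v * (List.ofFn (Fin.cons x t : Fin (n + 1) → G)).prod) = k
            then 1 else 0)
        = ∑ t ∈ Fintype.piFinset (fun s : Fin n => (hsph (j s.succ)).toFinset),
          (if (cayley S).dist 1 ((v * x) * (List.ofFn t).prod) = k then 1 else 0) := by
          refine Finset.sum_congr rfl fun t _ => ?_
          rw [hofn t, List.prod_cons, mul_assoc]
      _ = cnt S (fun n => (hsph n).toFinset) k (List.ofFn fun s : Fin n => j s.succ) (v * x) := by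
          rw [← Finset.card_filter]
          exact ih (fun s => j s.succ) (v * x)

end CayleyAux

/-- for a Cayley graph satisfying (S2), `tilde p_{i_{σ(1)},…,i_{σ(m)}}^k =
tilde p_{i₁,…,i_m}^k` for every permutation `σ`; equivalently the corresponding tuple
counts coincide. -/
theorem cayley_S2_walkCoeff_perm_invariant {G : Type*} [Group G] (S : Set G)
    (hfin : S.Finite) (hsym : ∀ s ∈ S, s⁻¹ ∈ S) (hid : (1 : G) ∉ S)
    (hgen : Subgroup.closure S = ⊤)
    (hS2 : ∀ i ∈ idx (cayley S) (1 : G), ∀ j ∈ idx (cayley S) (1 : G),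
      ∀ k ∈ idx (cayley S) (1 : G),
      ∀ v ∈ gsphere (cayley S) (1 : G) k, ∀ v' ∈ gsphere (cayley S) (1 : G) k,
        (gsphere (cayley S) v i ∩ gsphere (cayley S) (1 : G) j).ncard
          = (gsphere (cayley S) v' i ∩ gsphere (cayley S) (1 : G) j).ncard)
    (m : ℕ) (hm : 2 ≤ m) (i : Fin m → ℕ) (hi : ∀ l, i l ∈ idx (cayley S) (1 : G))
    (k : ℕ) (hk : k ∈ idx (cayley S) (1 : G)) (σ : Equiv.Perm (Fin m)) :
    walkCoeff (cayley S) (1 : G) (1 : G) (List.ofFn (fun l => i (σ l))) k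
      = walkCoeff (cayley S) (1 : G) (1 : G) (List.ofFn i) k ∧
    Set.ncard {v : Fin m → G | (∀ l : Fin m, v l ∈ gsphere (cayley S) (1 : G) (i (σ l))) ∧
        (cayley S).dist 1 (List.ofFn v).prod = k}
      = Set.ncard {v : Fin m → G | (∀ l : Fin m, v l ∈ gsphere (cayley S) (1 : G) (i l)) ∧
          (cayley S).dist 1 (List.ofFn v).prod = k} := by
  classical
  have hpre := CayleyAux.cayley_preconnected hsym hid hgen
  have hne : Nonempty G := ⟨1⟩
  have hconn : (cayley S).Connected := ⟨hpre⟩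
  have hsph := CayleyAux.sphere_finite hfin hsym hid hgen
  have hP : ∀ a ∈ idx (cayley S) (1 : G), ∀ b ∈ idx (cayley S) (1 : G),
      ∀ u w u' w' : G, (cayley S).dist u w = (cayley S).dist u' w' →
        (gsphere (cayley S) u a ∩ gsphere (cayley S) w b).ncard
          = (gsphere (cayley S) u' a ∩ gsphere (cayley S) w' b).ncard :=
    fun a ha b hb u w u' w' h => CayleyAux.constancy hS2 ha hb h
  have hperm : (List.ofFn fun l => i (σ l)).Perm (List.ofFn i) := σ.ofFn_comp_perm i
  have hent : ∀ (j : Fin m → ℕ), (∀ l, j l ∈ idx (cayley S) (1 : G)) →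
      ∀ a ∈ List.ofFn j, a ∈ idx (cayley S) (1 : G) := by
    intro j hj a ha
    obtain ⟨t, ht⟩ := List.mem_ofFn.mp ha
    exact ht ▸ hj t
  have hent1 := hent (fun l => i (σ l)) (fun l => hi (σ l))
  have hent2 := hent i hi
  have first := CayleyAux.walkCoeff_perm hconn hsph hP k hperm hent1 1
  refine ⟨first, ?_⟩
  have conv : ∀ j : Fin m → ℕ,
      {v : Fin m → G | (∀ l : Fin m, v l ∈ gsphere (cayley S) (1 : G) (j l)) ∧
          (cayley S).dist 1 (List.ofFn v).prod = k}.ncard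
        = cnt S (fun n => (hsph n).toFinset) k (List.ofFn j) 1 := by
    intro j
    have hseteq : {v : Fin m → G | (∀ l : Fin m, v l ∈ gsphere (cayley S) (1 : G) (j l)) ∧
          (cayley S).dist 1 (List.ofFn v).prod = k}
        = ↑((Fintype.piFinset fun t => (hsph (j t)).toFinset).filter
            fun u => (cayley S).dist 1 ((1 : G) * (List.ofFn u).prod) = k) := by
      ext u
      simp only [Set.mem_setOf_eq, Finset.coe_filter, Fintype.mem_piFinset,
        Set.Finite.mem_toFinset, one_mul]
    rw [hseteq, Set.ncard_coe_finset, CayleyAux.card_pi hsph k m j 1]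
  rw [conv (fun l => i (σ l)), conv i]
  have hq : (cnt S (fun n => (hsph n).toFinset) k (List.ofFn fun l => i (σ l)) 1 : ℚ)
      = cnt S (fun n => (hsph n).toFinset) k (List.ofFn i) 1 := by
    rw [← CayleyAux.walkCoeff_mul_prod hsph k _ hent1 1,
      ← CayleyAux.walkCoeff_mul_prod hsph k (List.ofFn i) hent2 1, first]
    congr 1
    rw [List.map_ofFn, List.map_ofFn, List.prod_ofFn, List.prod_ofFn]
    exact Fintype.prod_equiv σ _ _ (fun t => rfl)
  exact_mod_cast hq

end
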